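/- There exist a 3-element subset A ⊆ {1,…,7} and a 7-element subset B ⊆ {1,…,15} such that the round-robin product U = ∏_{(i,j)∈A×B} CNOT_{i→j} of 21 physical CNOT gates, each with control a qubit of a Steane code block and target a qubit of a [[15,1,3]] Reed–Muller code block, maps the tensor product of the two codespaces onto itself and implements the logical CNOT gate with the Steane block as control and the Reed–Muller block as target: U(|ā⟩ ⊗ |b̃⟩) = |ā⟩ ⊗ |(a⊕b)͂⟩ for all a, b ∈ {0,1}. -/

import Mathlib

open scoped Classical
open Matrix

noncomputable section

/-- basis vector `|x⟩` -/
def bvec {α : Type*} (x : α) : α → ℂ := fun y => if y = x then 1 else 0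

/-- inner product `⟪v, w⟫` on basis-indexed amplitude vectors -/
def qInner {α : Type*} [Fintype α] (v w : α → ℂ) : ℂ :=
  ∑ x, (starRingEnd ℂ) (v x) * w x

/-- Pauli X -/
def σx : Matrix Bool Bool ℂ := Matrix.of fun a b => if a = !b then 1 else 0
/-- Pauli Y -/
def σy : Matrix Bool Bool ℂ :=
  Matrix.of fun a b => if a = !b then (if a then Complex.I else -Complex.I) else 0
/-- Pauli Z -/
def σz : Matrix Bool Bool ℂ := Matrix.of fun a b => if a = b then (if a then -1 else 1) else 0
/-- Hadamard -/
def Hgate : Matrix Bool Bool ℂ :=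
  Matrix.of fun a b => (if a && b then -1 else 1) / (Real.sqrt 2 : ℂ)
/-- phase gate S = diag(1, i) -/
def Sgate : Matrix Bool Bool ℂ :=
  Matrix.of fun a b => if a = b then (if a then Complex.I else 1) else 0
/-- Z(θ) = diag(1, e^{iθ}) -/
def Zrot (θ : ℝ) : Matrix Bool Bool ℂ :=
  Matrix.of fun a b => if a = b then (if a then Complex.exp (θ * Complex.I) else 1) else 0

/-- tensor product over `ι` of single-qubit matrices -/
def tensMat {ι : Type*} [Fintype ι] (P : ι → Matrix Bool Bool ℂ) :
    Matrix (ι → Bool) (ι → Bool) ℂ :=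
  Matrix.of fun x y => ∏ i, P i (x i) (y i)

/-- CNOT with control `i`, target `t`, in one register -/
def CNOT {ι : Type*} (i t : ι) : Matrix (ι → Bool) (ι → Bool) ℂ :=
  Matrix.of fun y x => if y = Function.update x t (xor (x i) (x t)) then 1 else 0

/-- Z(θ) applied to qubit `t` -/
def ZrotAt {ι : Type*} (θ : ℝ) (t : ι) : Matrix (ι → Bool) (ι → Bool) ℂ :=
  Matrix.of fun y x => if y = x then (if x t then Complex.exp (θ * Complex.I) else 1) else 0

/-- `parityOdd A x` : the bits of `x` indexed by `A` have odd parity -/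
def parityOdd {ι : Type*} (A : Finset ι) (x : ι → Bool) : Prop :=
  (A.filter fun i => x i = true).card % 2 = 1

/-- `∏_{i ∈ A} Z_i` -/
def ZA {ι : Type*} [Fintype ι] (A : Finset ι) : Matrix (ι → Bool) (ι → Bool) ℂ :=
  tensMat fun i => if i ∈ A then σz else 1

/-- `∏_{j ∈ B} X_j` -/
def XB {ι : Type*} [Fintype ι] (B : Finset ι) : Matrix (ι → Bool) (ι → Bool) ℂ :=
  tensMat fun j => if j ∈ B then σx else 1

/-- the joint `+1`-eigenspace of a set of matrices, as a submodule -/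
def jointFixed {ι : Type*} [Fintype ι] (S : Set (Matrix (ι → Bool) (ι → Bool) ℂ)) :
    Submodule ℂ ((ι → Bool) → ℂ) where
  carrier := {v | ∀ g ∈ S, g.mulVec v = v}
  add_mem' := by
    intro a b ha hb g hg
    rw [Matrix.mulVec_add, ha g hg, hb g hg]
  zero_mem' := by
    intro g hg
    rw [Matrix.mulVec_zero]
  smul_mem' := by
    intro c a ha g hg
    rw [Matrix.mulVec_smul, ha g hg]

/-- a matrix on qubits `ι` acts only on the qubits in `A` (identity elsewhere) -/
def ActsOnlyOn {ι : Type*} (M : Matrix (ι → Bool) (ι → Bool) ℂ) (A : Set ι) : Prop :=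
  ∃ W : Matrix (A → Bool) (A → Bool) ℂ,
    ∀ x y, M x y =
      if ∀ i, i ∉ A → x i = y i then W (fun i => x i.val) (fun i => y i.val) else 0

/-- an `ι`-qubit Pauli operator `i^c · ⨂_i P_i` -/
structure PauliOp (ι : Type*) [Fintype ι] where
  phase : Fin 4
  fac : ι → Matrix Bool Bool ℂ
  isPauli : ∀ i, fac i = 1 ∨ fac i = σx ∨ fac i = σy ∨ fac i = σz

def PauliOp.toMatrix {ι : Type*} [Fintype ι] (p : PauliOp ι) :
    Matrix (ι → Bool) (ι → Bool) ℂ :=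
  Complex.I ^ (p.phase : ℕ) • tensMat p.fac

/-- number of non-identity tensor factors -/
def PauliOp.weight {ι : Type*} [Fintype ι] (p : PauliOp ι) : ℕ :=
  Set.ncard {i | p.fac i ≠ 1}

/-- tensor product of states of two registers -/
def tens2 {ι κ : Type*} (v : (ι → Bool) → ℂ) (w : (κ → Bool) → ℂ) :
    (ι → Bool) × (κ → Bool) → ℂ :=
  fun p => v p.1 * w p.2

/-- CNOT with control qubit `i` of the first register and target qubit `j` of the second -/
def CNOT2 {ι κ : Type*} (i : ι) (j : κ) :
    Matrix ((ι → Bool) × (κ → Bool)) ((ι → Bool) × (κ → Bool)) ℂ :=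
  Matrix.of fun y x =>
    if y = (x.1, Function.update x.2 j (xor (x.1 i) (x.2 j))) then 1 else 0

-- Steane code
def steaneGen : Fin 3 → (Fin 7 → Bool) :=
  ![![false, false, false, true, true, true, true],
    ![false, true, true, false, false, true, true],
    ![true, false, true, false, true, false, true]]

/-- the binary [7,3] code generated by 0001111, 0110011, 1010101 -/
def hammingC : Set (Fin 7 → Bool) :=
  {c | ∃ a b e : Bool,
    c = fun i => xor (a && steaneGen 0 i) (xor (b && steaneGen 1 i) (e && steaneGen 2 i))}

/-- Steane logical basis: `steane false = |0̄⟩`, `steane true = |1̄⟩ = X^{⊗7}|0̄⟩` -/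
def steane : Bool → ((Fin 7 → Bool) → ℂ) := fun b =>
  if b then (tensMat fun _ => σx).mulVec (fun y => if y ∈ hammingC then ((Real.sqrt 8 : ℂ))⁻¹ else 0)
  else fun y => if y ∈ hammingC then ((Real.sqrt 8 : ℂ))⁻¹ else 0

-- 5-qubit code
def fiveStab : Fin 4 → Matrix (Fin 5 → Bool) (Fin 5 → Bool) ℂ :=
  ![tensMat ![σx, σz, σz, σx, 1],
    tensMat ![1, σx, σz, σz, σx],
    tensMat ![σx, 1, σx, σz, σz],
    tensMat ![σz, σx, 1, σx, σz]]

def fiveCodespace : Submodule ℂ ((Fin 5 → Bool) → ℂ) :=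
  jointFixed (Set.range fiveStab)

/-- a choice of logical basis for the 5-qubit code -/
def fiveLogical (v : Bool → ((Fin 5 → Bool) → ℂ)) : Prop :=
  (∀ b, v b ∈ fiveCodespace) ∧ (∀ b, qInner (v b) (v b) = 1) ∧
  (tensMat fun _ : Fin 5 => σz).mulVec (v false) = v false ∧
  (tensMat fun _ : Fin 5 => σz).mulVec (v true) = -(v true) ∧
  (tensMat fun _ : Fin 5 => σx).mulVec (v false) = v true

-- [[15,1,3]] Reed–Muller code
def rmBit (i : Fin 15) (j : Fin 4) : Bool := Nat.testBit (i.val + 1) j.val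

def rmXstab (j : Fin 4) : Matrix (Fin 15 → Bool) (Fin 15 → Bool) ℂ :=
  tensMat fun i => if rmBit i j then σx else 1

def rmZstab (j k : Fin 4) : Matrix (Fin 15 → Bool) (Fin 15 → Bool) ℂ :=
  tensMat fun i => if rmBit i j && rmBit i k then σz else 1

def rmCodespace : Submodule ℂ ((Fin 15 → Bool) → ℂ) :=
  jointFixed ({M | ∃ j, M = rmXstab j} ∪ {M | ∃ j k, j < k ∧ M = rmZstab j k})

/-- a choice of logical basis for the [[15,1,3]] Reed–Muller code -/
def rmLogical (w : Bool → ((Fin 15 → Bool) → ℂ)) : Prop :=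
  (∀ b, w b ∈ rmCodespace) ∧ (∀ b, qInner (w b) (w b) = 1) ∧
  (tensMat fun _ : Fin 15 => σz).mulVec (w false) = w false ∧
  (tensMat fun _ : Fin 15 => σz).mulVec (w true) = -(w true) ∧
  (tensMat fun _ : Fin 15 => σx).mulVec (w false) = w true


namespace Stmt8Aux

/-- product of indicator factors is an indicator of function equality -/
lemma prod_if {ι : Type*} [Fintype ι] [DecidableEq ι] (x g : ι → Bool) :
    (∏ i, if x i = g i then (1 : ℂ) else 0) = if x = g then 1 else 0 := by
  by_cases h : x = g
  · subst h; simp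
  · rw [if_neg h]
    obtain ⟨i, hi⟩ : ∃ i, x i ≠ g i := by
      by_contra hc; push_neg at hc; exact h (funext hc)
    exact Finset.prod_eq_zero (Finset.mem_univ i) (by simp [hi])

/-- a permutation matrix of an involution acts on vectors by precomposition -/
lemma perm_mulVec {n : Type*} [Fintype n] [DecidableEq n] (F : n → n)
    (hF : ∀ x, F (F x) = x) (v : n → ℂ) :
    (Matrix.of fun y x => if y = F x then (1 : ℂ) else 0).mulVec v = fun y => v (F y) := by
  funext y
  have key : ∀ x, (y = F x) = (x = F y) := by
    intro x
    apply propext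
    constructor
    · rintro rfl; rw [hF]
    · rintro rfl; rw [hF]
  simp only [Matrix.mulVec, dotProduct, Matrix.of_apply, key]
  simp [Finset.sum_ite_eq']

lemma permMat_mul {n : Type*} [Fintype n] [DecidableEq n] (f g : n → n) :
    (Matrix.of fun y x => if y = f x then (1 : ℂ) else 0)
      * (Matrix.of fun y x => if y = g x then (1 : ℂ) else 0)
      = Matrix.of fun y x => if y = f (g x) then (1 : ℂ) else 0 := by
  ext y x
  simp only [Matrix.mul_apply, Matrix.of_apply]
  rw [Finset.sum_eq_single (g x)]
  · simp
  · intro z _ hz; simp [hz]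
  · intro h; exact absurd (Finset.mem_univ _) h

/-- a tensor product of `σx`'s and `1`'s acts by flipping the corresponding bits -/
lemma tensX_mulVec {ι : Type*} [Fintype ι] [DecidableEq ι] (f : ι → Bool)
    (v : (ι → Bool) → ℂ) :
    (tensMat fun i => if f i then σx else 1).mulVec v
      = fun y => v (fun i => xor (y i) (f i)) := by
  have hmat : (tensMat fun i => if f i then σx else 1)
      = Matrix.of fun y x : ι → Bool =>
          if y = (fun i => xor (x i) (f i)) then (1 : ℂ) else 0 := by
    ext y x
    simp only [tensMat, Matrix.of_apply]
    have h1 : ∀ i, (if f i then σx else 1) (y i) (x i)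
        = if y i = xor (x i) (f i) then (1 : ℂ) else 0 := by
      intro i
      cases hf : f i <;> cases hy : y i <;> cases hx : x i <;>
        simp [σx, Matrix.one_apply]
    simp only [h1]
    exact prod_if y _
  have hinv : ∀ x : ι → Bool, (fun i => xor ((fun i => xor (x i) (f i)) i) (f i)) = x := by
    intro x; funext i; simp [Bool.xor_assoc]
  rw [hmat, perm_mulVec _ hinv]

def parA (x : Fin 7 → Bool) : Bool := xor (x 0) (xor (x 1) (x 2))

def A7 : Finset (Fin 7) := {0, 1, 2}

def B15 : Finset (Fin 15) := {0, 1, 2, 3, 4, 5, 6}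

lemma steane_parity (a : Bool) (y : Fin 7 → Bool) (h : steane a y ≠ 0) : parA y = a := by
  cases a
  · by_cases hy : y ∈ hammingC
    · obtain ⟨α, β, ε, hc⟩ := hy
      subst hc
      clear h
      revert α β ε
      decide
    · exact absurd (by simp [steane, hy]) h
  · have hs : steane true y
        = (if (fun i => xor (y i) true) ∈ hammingC then ((Real.sqrt 8 : ℂ))⁻¹ else 0) := by
      have h1 : steane true = (tensMat fun _ : Fin 7 => σx).mulVec
          (fun z => if z ∈ hammingC then ((Real.sqrt 8 : ℂ))⁻¹ else 0) := by
        simp [steane]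
      have h2 : (tensMat fun _ : Fin 7 => σx)
          = tensMat fun i : Fin 7 => if (fun _ : Fin 7 => true) i then σx else 1 := by
        simp [tensMat]
      rw [h1, h2, tensX_mulVec]
    rw [hs] at h
    by_cases hy : (fun i => xor (y i) true) ∈ hammingC
    · obtain ⟨α, β, ε, hc⟩ := hy
      have hyv : y = fun i => xor (xor (α && steaneGen 0 i)
          (xor (β && steaneGen 1 i) (ε && steaneGen 2 i))) true := by
        funext i
        have := congrFun hc i
        have hb : ∀ u c : Bool, xor u true = c → u = xor c true := by decide
        exact hb _ _ this
      rw [hyv]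
      clear h hc hyv
      revert α β ε
      decide
    · exact absurd (if_neg hy) h

lemma update_irrel {α β : Type*} {i1 i2 : DecidableEq α} (f : α → β) (j : α) (v : β) :
    @Function.update α (fun _ => β) i1 f j v = @Function.update α (fun _ => β) i2 f j v := by
  funext a
  unfold Function.update
  by_cases h : a = j
  · rw [dif_pos h, dif_pos h]
  · rw [dif_neg h, dif_neg h]

/-- action of one physical CNOT on basis labels -/
def gfun (p : Fin 7 × Fin 15) (x : (Fin 7 → Bool) × (Fin 15 → Bool)) :
    (Fin 7 → Bool) × (Fin 15 → Bool) :=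
  (x.1, Function.update x.2 p.2 (xor (x.1 p.1) (x.2 p.2)))

lemma cnot_cond {y x : (Fin 7 → Bool) × (Fin 15 → Bool)} (p : Fin 7 × Fin 15)
    {inst : DecidableEq (Fin 15)} :
    (y = (x.1, @Function.update (Fin 15) (fun _ => Bool) inst x.2 p.2
        (xor (x.1 p.1) (x.2 p.2))))
      ↔ y = gfun p x := by
  rw [show @Function.update (Fin 15) (fun _ => Bool) inst x.2 p.2 (xor (x.1 p.1) (x.2 p.2))
      = @Function.update (Fin 15) (fun _ => Bool) (instDecidableEqFin 15) x.2 p.2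
        (xor (x.1 p.1) (x.2 p.2)) from update_irrel _ _ _]
  unfold gfun
  exact Iff.rfl

def cl (l : List (Fin 7 × Fin 15)) (x1 : Fin 7 → Bool) (j : Fin 15) : Bool :=
  l.foldr (fun p s => xor (decide (j = p.2) && x1 p.1) s) false

lemma foldr_gfun (l : List (Fin 7 × Fin 15)) (x : (Fin 7 → Bool) × (Fin 15 → Bool)) :
    l.foldr (fun p f => gfun p ∘ f) id x
      = (x.1, fun j => xor (x.2 j) (cl l x.1 j)) := by
  induction l with
  | nil => simp [cl]
  | cons p t ih =>
    have hrot : ∀ a b c : Bool, xor a (xor b c) = xor b (xor a c) := by decide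
    simp only [List.foldr_cons, Function.comp_apply, ih]
    refine Prod.ext rfl ?_
    funext j
    show Function.update (fun j' => xor (x.2 j') (cl t x.1 j')) p.2
        (xor (x.1 p.1) (xor (x.2 p.2) (cl t x.1 p.2))) j
      = xor (x.2 j) (cl (p :: t) x.1 j)
    have hcl : cl (p :: t) x.1 j = xor (decide (j = p.2) && x.1 p.1) (cl t x.1 j) := rfl
    by_cases hj : j = p.2
    · subst hj
      rw [Function.update_self, hcl]
      have hd : decide (p.2 = p.2) = true := by simp
      rw [hd, Bool.true_and]
      exact hrot _ _ _
    · rw [Function.update_of_ne hj, hcl]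
      simp [hj]

lemma cnot_prod (l : List (Fin 7 × Fin 15)) :
    (l.map fun p => CNOT2 p.1 p.2).prod
      = Matrix.of fun y x =>
          if y = l.foldr (fun p f => gfun p ∘ f) id x then (1 : ℂ) else 0 := by
  induction l with
  | nil =>
    ext y x
    simp [Matrix.one_apply]
    split_ifs <;> simp_all
  | cons p t ih =>
    rw [List.map_cons, List.prod_cons, ih]
    have hc : CNOT2 p.1 p.2
        = Matrix.of fun y x => if y = gfun p x then (1 : ℂ) else 0 := by
      ext y x
      show (CNOT2 p.1 p.2) y x = _
      unfold CNOT2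
      simp only [Matrix.of_apply]
      by_cases h : y = gfun p x
      · rw [if_pos ((cnot_cond p).mpr h), if_pos h]
      · rw [if_neg (fun hh => h ((cnot_cond p).mp hh)), if_neg h]
    rw [hc, permMat_mul]
    rfl

def z2 : Bool → ZMod 2 := fun b => if b then 1 else 0

lemma z2_inj : Function.Injective z2 := by decide

lemma z2_xor (a b : Bool) : z2 (xor a b) = z2 a + z2 b := by
  cases a <;> cases b <;> decide

lemma z2_cl (l : List (Fin 7 × Fin 15)) (x1 : Fin 7 → Bool) (j : Fin 15) :
    z2 (cl l x1 j) = (l.map fun p => z2 (decide (j = p.2) && x1 p.1)).sum := by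
  induction l with
  | nil => simp [cl, z2]
  | cons p t ih =>
    have hcl : cl (p :: t) x1 j = xor (decide (j = p.2) && x1 p.1) (cl t x1 j) := rfl
    rw [hcl, z2_xor, ih, List.map_cons, List.sum_cons]

lemma cl_eval (l : List (Fin 7 × Fin 15)) (hnd : l.Nodup) (hS : l.toFinset = A7 ×ˢ B15)
    (x1 : Fin 7 → Bool) (j : Fin 15) :
    cl l x1 j = (decide (j ∈ B15) && parA x1) := by
  apply z2_inj
  rw [z2_cl, ← List.sum_toFinset _ hnd, hS, Finset.sum_product]
  have hterm : ∀ (i : Fin 7) (j' : Fin 15),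
      z2 (decide (j = j') && x1 i) = (if j = j' then z2 (x1 i) else 0) := by
    intro i j'
    by_cases h : j = j'
    · simp [h]
    · simp [h, z2]
  have hinner : ∀ i : Fin 7, (∑ j' ∈ B15, z2 (decide (j = j') && x1 i))
      = (if j ∈ B15 then z2 (x1 i) else 0) := by
    intro i
    simp only [hterm]
    exact Finset.sum_ite_eq B15 j _
  simp only [hinner]
  have hsum : (∑ i ∈ A7, if j ∈ B15 then z2 (x1 i) else 0)
      = if j ∈ B15 then (z2 (x1 0) + (z2 (x1 1) + z2 (x1 2))) else 0 := by
    by_cases hB : j ∈ B15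
    · simp only [if_pos hB]
      show (A7.sum fun i => z2 (x1 i)) = _
      rw [show A7 = insert 0 (insert 1 {2}) from rfl,
        Finset.sum_insert (by decide), Finset.sum_insert (by decide),
        Finset.sum_singleton]
    · simp [hB]
  rw [hsum]
  by_cases hB : j ∈ B15
  · rw [if_pos hB]
    have hd : decide (j ∈ B15) = true := by simp [hB]
    rw [hd, Bool.true_and, parA, z2_xor, z2_xor]
  · rw [if_neg hB]
    have hd : decide (j ∈ B15) = false := by simp [hB]
    rw [hd, Bool.false_and]
    rfl

set_option maxHeartbeats 1000000 in
lemma b15_bit : ∀ j : Fin 15, decide (j ∈ B15) = xor true (rmBit j 3) := by decide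

set_option maxHeartbeats 1000000 in
lemma mem_jointFixed {ι : Type*} [Fintype ι] {S : Set (Matrix (ι → Bool) (ι → Bool) ℂ)}
    {v : (ι → Bool) → ℂ} (h : v ∈ jointFixed S) : ∀ g ∈ S, g.mulVec v = v := h

lemma mulVec_inst {n : Type*} (i1 i2 : Fintype n) (M : Matrix n n ℂ) (v : n → ℂ) :
    @Matrix.mulVec n n ℂ _ i1 M v = @Matrix.mulVec n n ℂ _ i2 M v := by
  cases Subsingleton.elim i1 i2
  rfl

lemma rm_stab3 (w : Bool → ((Fin 15 → Bool) → ℂ)) (hw : rmLogical w) (b : Bool) :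
    (rmXstab 3).mulVec (w b) = w b := by
  have h0 := mem_jointFixed (hw.1 b) (rmXstab 3) (Or.inl ⟨3, rfl⟩)
  exact (mulVec_inst _ _ _ _).trans h0

set_option maxHeartbeats 1000000 in
lemma rm_flip (w : Bool → ((Fin 15 → Bool) → ℂ)) (hw : rmLogical w) (b : Bool)
    (y : Fin 15 → Bool) :
    w b (fun j => xor (y j) (decide (j ∈ B15))) = w (!b) y := by
  have hstab : (rmXstab 3).mulVec (w b) = w b := rm_stab3 w hw b
  have hstab' : ∀ z : Fin 15 → Bool, w b (fun i => xor (z i) (rmBit i 3)) = w b z := by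
    intro z
    have h2 : rmXstab 3 = tensMat fun i => if rmBit i 3 then σx else 1 := rfl
    rw [h2, tensX_mulVec] at hstab
    exact congrFun hstab z
  have hall : (tensMat fun _ : Fin 15 => σx).mulVec (w false) = w true := hw.2.2.2.2
  have hall' : ∀ z : Fin 15 → Bool, w false (fun i => xor (z i) true) = w true z := by
    have h2 : (tensMat fun _ : Fin 15 => σx)
        = tensMat fun i : Fin 15 => if (fun _ : Fin 15 => true) i then σx else 1 := by
      simp [tensMat]
    rw [h2, tensX_mulVec] at hall
    exact fun z => congrFun hall z
  have hX : ∀ (b' : Bool) (z : Fin 15 → Bool),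
      w b' (fun i => xor (z i) true) = w (!b') z := by
    intro b' z
    cases b'
    · exact hall' z
    · have h1 := hall' (fun i => xor (z i) true)
      have h2 : (fun i => xor (xor (z i) true) true) = z := by
        funext i; simp [Bool.xor_assoc]
      rw [h2] at h1
      exact h1.symm
  have harg : (fun j => xor (y j) (decide (j ∈ B15)))
      = fun j => xor ((fun i => xor (y i) true) j) (rmBit j 3) := by
    funext j
    rw [b15_bit j]
    simp [Bool.xor_assoc]
  rw [harg, hstab' (fun i => xor (y i) true), hX]

end Stmt8Aux

open Stmt8Aux

set_option maxHeartbeats 1000000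

/-- there are a 3-element set `A ⊆ {1,…,7}` and a 7-element set
`B ⊆ {1,…,15}` such that the round-robin product of the 21 CNOT gates `CNOT_{i→j}`,
`(i,j) ∈ A×B`, maps the tensor product of the Steane and `[[15,1,3]]` Reed–Muller
codespaces onto itself and implements the logical CNOT (Steane control, RM target). -/
theorem stmt8 :
    ∃ (A : Finset (Fin 7)) (B : Finset (Fin 15)),
      A.card = 3 ∧ B.card = 7 ∧
      ∀ l : List (Fin 7 × Fin 15), l.Nodup → l.toFinset = A ×ˢ B →
        ∀ w : Bool → ((Fin 15 → Bool) → ℂ), rmLogical w →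
          (∀ a b : Bool,
            ((l.map fun p => CNOT2 p.1 p.2).prod).mulVec (tens2 (steane a) (w b))
              = tens2 (steane a) (w (xor a b))) ∧
          Submodule.map ((l.map fun p => CNOT2 p.1 p.2).prod).mulVecLin
              (Submodule.span ℂ {u | ∃ a b : Bool, u = tens2 (steane a) (w b)})
            = Submodule.span ℂ {u | ∃ a b : Bool, u = tens2 (steane a) (w b)} := by
  refine ⟨A7, B15, by decide, by decide, ?_⟩
  intro l hnd hS w hw
  set F : ((Fin 7 → Bool) × (Fin 15 → Bool)) → ((Fin 7 → Bool) × (Fin 15 → Bool)) :=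
    fun x => (x.1, fun j => xor (x.2 j) (decide (j ∈ B15) && parA x.1)) with hFdef
  have hFl : ∀ x, l.foldr (fun p f => gfun p ∘ f) id x = F x := by
    intro x
    rw [foldr_gfun]
    refine Prod.ext rfl ?_
    funext j
    show xor (x.2 j) (cl l x.1 j) = xor (x.2 j) (decide (j ∈ B15) && parA x.1)
    rw [cl_eval l hnd hS]
  have hinv : ∀ x, F (F x) = x := by
    intro x
    refine Prod.ext rfl ?_
    funext j
    show xor (xor (x.2 j) _) _ = x.2 j
    simp [Bool.xor_assoc, Bool.xor_self, Bool.xor_false, show (F x).1 = x.1 from rfl]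
  have hU : (l.map fun p => CNOT2 p.1 p.2).prod
      = Matrix.of fun y x => if y = F x then (1 : ℂ) else 0 := by
    rw [cnot_prod]
    ext y x
    simp only [Matrix.of_apply]
    rw [hFl x]
  have hmain : ∀ a b : Bool,
      ((l.map fun p => CNOT2 p.1 p.2).prod).mulVec (tens2 (steane a) (w b))
        = tens2 (steane a) (w (xor a b)) := by
    intro a b
    rw [hU, perm_mulVec _ hinv]
    funext y
    show steane a (F y).1 * w b ((F y).2) = steane a y.1 * w (xor a b) y.2
    have hF1 : (F y).1 = y.1 := rfl
    rw [hF1]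
    by_cases h0 : steane a y.1 = 0
    · simp [h0]
    · have hpar := steane_parity a y.1 h0
      congr 1
      cases a
      · have h2 : (F y).2 = y.2 := by
          funext j
          show xor (y.2 j) (decide (j ∈ B15) && parA y.1) = y.2 j
          rw [hpar]
          simp
        rw [h2, Bool.false_xor]
      · have h2 : (F y).2 = fun j => xor (y.2 j) (decide (j ∈ B15)) := by
          funext j
          show xor (y.2 j) (decide (j ∈ B15) && parA y.1) = _
          rw [hpar]
          simp
        rw [h2, rm_flip w hw b y.2, Bool.true_xor]
  refine ⟨hmain, ?_⟩
  rw [Submodule.map_span]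
  congr 1
  ext u
  simp only [Set.mem_image, Set.mem_setOf_eq]
  constructor
  · rintro ⟨v, ⟨a, b, rfl⟩, rfl⟩
    exact ⟨a, xor a b, by rw [Matrix.mulVecLin_apply, hmain]⟩
  · rintro ⟨a, b, rfl⟩
    refine ⟨tens2 (steane a) (w (xor a b)), ⟨a, xor a b, rfl⟩, ?_⟩
    rw [Matrix.mulVecLin_apply, hmain]
    have : xor a (xor a b) = b := by cases a <;> cases b <;> rfl
    rw [this]

end
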